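/- Let α be a positive integer, 0 < p = 1 - q < 1, z ≥ 0, and for 1 ≤ k ≤ α define h₂(k) = ∑_{j=k}^{α} [(α-k)!/(α-j)!] · [(k-1)!/j!] · (p/q)^{j-k} · E[(B_{α,p}-z)^+]. Then h₂(k) ≤ q^{k-α}. -/

import Mathlib

open Finset

/-- `E[(B_{α,p} - z)^+]`, the expected call function of a binomial random variable
`B_{α,p}` with `P(B = j) = C(α,j) p^j (1-p)^{α-j}` for `j = 0,…,α`. -/
noncomputable def binomCallExp (α : ℕ) (p z : ℝ) : ℝ :=
  ∑ j ∈ Finset.range (α + 1),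
    (α.choose j : ℝ) * p ^ j * (1 - p) ^ (α - j) * max ((j : ℝ) - z) 0

/-- `h₁(k) = ∑_{j=k}^{α} [(α-k)!/(α-j)!]·[(k-1)!/j!]·(p/q)^{j-k}·(j-z)^+` with `q = 1 - p`. -/
noncomputable def h1 (α : ℕ) (p z : ℝ) (k : ℕ) : ℝ :=
  ∑ j ∈ Finset.Icc k α,
    ((α - k).factorial : ℝ) / ((α - j).factorial : ℝ) *
      (((k - 1).factorial : ℝ) / (j.factorial : ℝ)) *
        (p / (1 - p)) ^ (j - k) * max ((j : ℝ) - z) 0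

/-- `h₂(k) = ∑_{j=k}^{α} [(α-k)!/(α-j)!]·[(k-1)!/j!]·(p/q)^{j-k}·E[(B_{α,p}-z)^+]`
with `q = 1 - p`. -/
noncomputable def h2 (α : ℕ) (p z : ℝ) (k : ℕ) : ℝ :=
  ∑ j ∈ Finset.Icc k α,
    ((α - k).factorial : ℝ) / ((α - j).factorial : ℝ) *
      (((k - 1).factorial : ℝ) / (j.factorial : ℝ)) *
        (p / (1 - p)) ^ (j - k) * binomCallExp α p z

/-- The solution `g_z` of the binomial Stein equation: `g_z(0) = 0`,
`g_z(k) = -∑_{j=k}^{α} [(α-k)!/(α-j)!]·[(k-1)!/j!]·(p/q)^{j-k}·[(j-z)^+ - E(B_{α,p}-z)^+]`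
for `1 ≤ k ≤ α`, extended by `g_z(k) = 0` for `k > α` (in particular `g_z(α+1) = 0`). -/
noncomputable def steinSol (α : ℕ) (p z : ℝ) (k : ℕ) : ℝ :=
  if k = 0 ∨ α < k then 0
  else
    -∑ j ∈ Finset.Icc k α,
      ((α - k).factorial : ℝ) / ((α - j).factorial : ℝ) *
        (((k - 1).factorial : ℝ) / (j.factorial : ℝ)) *
          (p / (1 - p)) ^ (j - k) * (max ((j : ℝ) - z) 0 - binomCallExp α p z)

/-- For `z ≥ 0` and `1 ≤ k ≤ α`, the quantity
`h₂(k) = ∑_{j=k}^{α} [(α-k)!/(α-j)!]·[(k-1)!/j!]·(p/q)^{j-k}·E[(B_{α,p}-z)^+]`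
satisfies `h₂(k) ≤ q^{k-α}`. -/

private lemma nat_key (α k j : ℕ) (hk : 1 ≤ k) (hkj : k ≤ j) (hjα : j ≤ α) :
    α * ((k - 1).factorial * (j - k + 1).factorial) ≤ (α - k + 1) * j.factorial := by
  have h1 : (k - 1) ≤ j := by omega
  have h2 : j.choose (k-1) * (k-1).factorial * (j - (k-1)).factorial = j.factorial :=
    Nat.choose_mul_factorial_mul_factorial h1
  have h3 : j - (k-1) = j - k + 1 := by omega
  have h4 : k ≤ j.choose (k-1) := by
    calc k = k.choose 1 := (Nat.choose_one_right k).symm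
      _ = k.choose (k - 1) := by
          rw [show k - 1 = k - 1 from rfl, ← Nat.choose_symm hk]
      _ ≤ j.choose (k-1) := Nat.choose_le_choose _ hkj
  have h5 : α ≤ (α - k + 1) * k := by
    have : α - k ≤ (α - k) * k := Nat.le_mul_of_pos_right _ hk
    calc α = (α - k) + k := by omega
      _ ≤ (α - k) * k + k := by omega
      _ = (α - k + 1) * k := by ring
  calc α * ((k - 1).factorial * (j - k + 1).factorial)
      ≤ ((α - k + 1) * k) * ((k - 1).factorial * (j - k + 1).factorial) :=
        Nat.mul_le_mul_right _ h5
    _ ≤ ((α - k + 1) * j.choose (k-1)) * ((k - 1).factorial * (j - k + 1).factorial) := by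
        apply Nat.mul_le_mul_right
        exact Nat.mul_le_mul_left _ h4
    _ = (α - k + 1) * (j.choose (k-1) * (k-1).factorial * (j - (k-1)).factorial) := by
        rw [h3]; ring
    _ = (α - k + 1) * j.factorial := by rw [h2]

private lemma nat_main (α k j : ℕ) (hk : 1 ≤ k) (hkj : k ≤ j) (hjα : j ≤ α) :
    α * ((α - k).factorial * (k - 1).factorial)
      ≤ (α - k + 1).choose (j - k + 1) * ((α - j).factorial * j.factorial) := by
  have hle : j - k + 1 ≤ α - k + 1 := by omega
  have hch : (α-k+1).choose (j-k+1) * (j-k+1).factorial * ((α-k+1) - (j-k+1)).factorial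
      = (α-k+1).factorial := Nat.choose_mul_factorial_mul_factorial hle
  have hsub : (α-k+1) - (j-k+1) = α - j := by omega
  rw [hsub] at hch
  have hkey := nat_key α k j hk hkj hjα
  apply Nat.le_of_mul_le_mul_right _ (Nat.factorial_pos (j-k+1))
  calc α * ((α-k).factorial * (k-1).factorial) * (j-k+1).factorial
      = (α-k).factorial * (α * ((k-1).factorial * (j-k+1).factorial)) := by ring
    _ ≤ (α-k).factorial * ((α-k+1) * j.factorial) := Nat.mul_le_mul_left _ hkey
    _ = (α-k+1).factorial * j.factorial := by
        rw [Nat.factorial_succ (α-k)]; ring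
    _ = (α - k + 1).choose (j - k + 1) * ((α - j).factorial * j.factorial)
          * (j - k + 1).factorial := by rw [← hch]; ring

private lemma binom_mean (α : ℕ) (hα : 0 < α) (p : ℝ) :
    ∑ j ∈ Finset.range (α + 1),
      (α.choose j : ℝ) * p ^ j * (1 - p) ^ (α - j) * (j : ℝ) = α * p := by
  obtain ⟨n, rfl⟩ : ∃ n, α = n + 1 := ⟨α - 1, by omega⟩
  rw [Finset.sum_range_succ']
  have key : ∀ i ∈ Finset.range (n+1),
      ((n+1).choose (i+1) : ℝ) * p ^ (i+1) * (1 - p) ^ ((n+1) - (i+1)) * ((i+1 : ℕ) : ℝ)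
      = ((n+1 : ℕ) : ℝ) * p * (p ^ i * (1 - p) ^ (n - i) * (n.choose i : ℝ)) := by
    intro i _
    have h : ((n+1).choose (i+1) : ℝ) * ((i+1 : ℕ) : ℝ) = ((n+1 : ℕ) : ℝ) * (n.choose i : ℝ) := by
      rw [← Nat.cast_mul, ← Nat.cast_mul, ← Nat.add_one_mul_choose_eq]
    have hs : (n+1) - (i+1) = n - i := by omega
    rw [hs]
    calc ((n+1).choose (i+1) : ℝ) * p ^ (i+1) * (1 - p) ^ (n - i) * ((i+1 : ℕ) : ℝ)
        = (((n+1).choose (i+1) : ℝ) * ((i+1 : ℕ) : ℝ)) * (p ^ (i+1) * (1 - p) ^ (n - i)) := by ring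
      _ = (((n+1 : ℕ) : ℝ) * (n.choose i : ℝ)) * (p ^ (i+1) * (1 - p) ^ (n - i)) := by rw [h]
      _ = ((n+1 : ℕ) : ℝ) * p * (p ^ i * (1 - p) ^ (n - i) * (n.choose i : ℝ)) := by ring
  rw [Finset.sum_congr rfl key]
  rw [← Finset.mul_sum, ← add_pow]
  push_cast
  rw [show p + (1 - p) = 1 by ring, one_pow]
  norm_num

private lemma callExp_le (α : ℕ) (hα : 0 < α) (p : ℝ) (hp : 0 < p) (hp1 : p < 1)
    (z : ℝ) (hz : 0 ≤ z) : binomCallExp α p z ≤ α * p := by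
  rw [← binom_mean α hα p]
  apply Finset.sum_le_sum
  intro j _
  have hqn : (0:ℝ) ≤ 1 - p := by linarith
  have h0 : (0:ℝ) ≤ (α.choose j : ℝ) * p ^ j * (1 - p) ^ (α - j) :=
    mul_nonneg (mul_nonneg (Nat.cast_nonneg _) (pow_nonneg hp.le _)) (pow_nonneg hqn _)
  exact mul_le_mul_of_nonneg_left (max_le (by linarith) (Nat.cast_nonneg j)) h0

theorem h2_le (α : ℕ) (hα : 0 < α) (p q : ℝ)
    (hq : q = 1 - p) (hp : 0 < p) (hp1 : p < 1) (z : ℝ) (hz : 0 ≤ z)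
    (k : ℕ) (hk : 1 ≤ k) (hkα : k ≤ α) :
    h2 α p z k ≤ q ^ ((k : ℤ) - (α : ℤ)) := by
  have hq1 : (0:ℝ) < 1 - p := by linarith
  have hE := callExp_le α hα p hp hp1 z hz
  have htnn : (0:ℝ) ≤ p / (1 - p) := (div_pos hp hq1).le
  have hDnn : ∀ j : ℕ, (0:ℝ) ≤ ((α - k).factorial : ℝ) / ((α - j).factorial : ℝ) *
      (((k - 1).factorial : ℝ) / (j.factorial : ℝ)) * (p / (1 - p)) ^ (j - k) :=
    fun j => mul_nonneg (mul_nonneg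
      (div_nonneg (Nat.cast_nonneg _) (Nat.cast_nonneg _))
      (div_nonneg (Nat.cast_nonneg _) (Nat.cast_nonneg _))) (pow_nonneg htnn _)
  set T : ℝ := ∑ j ∈ Finset.Icc k α,
      ((α - k).factorial : ℝ) / ((α - j).factorial : ℝ) *
        (((k - 1).factorial : ℝ) / (j.factorial : ℝ)) *
          (p / (1 - p)) ^ (j - k) * ((α : ℝ) * p) with hT
  have step1 : h2 α p z k ≤ T := by
    rw [hT]
    unfold h2
    exact Finset.sum_le_sum fun j _ => mul_le_mul_of_nonneg_left hE (hDnn j)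
  set g : ℕ → ℝ := fun j =>
      p ^ (j - k + 1) * (1 - p) ^ (α - j) * ((α - k + 1).choose (j - k + 1) : ℝ) with hg
  have step2 : T * (1 - p) ^ (α - k) ≤ 1 := by
    rw [hT, Finset.sum_mul]
    have key : ∀ j ∈ Finset.Icc k α,
        ((α - k).factorial : ℝ) / ((α - j).factorial : ℝ) *
          (((k - 1).factorial : ℝ) / (j.factorial : ℝ)) *
            (p / (1 - p)) ^ (j - k) * ((α : ℝ) * p) * (1 - p) ^ (α - k) ≤ g j := by
      intro j hj
      rw [Finset.mem_Icc] at hj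
      obtain ⟨hkj, hjα⟩ := hj
      have hpow : (1-p)^(α-k) = (1-p)^(j-k) * (1-p)^(α-j) := by
        rw [← pow_add]; congr 1; omega
      have hne1 : ((α-j).factorial : ℝ) ≠ 0 := Nat.cast_ne_zero.mpr (Nat.factorial_ne_zero _)
      have hne2 : ((j.factorial : ℕ) : ℝ) ≠ 0 := Nat.cast_ne_zero.mpr (Nat.factorial_ne_zero _)
      have hne3 : (1 - p) ≠ 0 := ne_of_gt hq1
      have hrw : ((α - k).factorial : ℝ) / ((α - j).factorial : ℝ) *
          (((k - 1).factorial : ℝ) / (j.factorial : ℝ)) *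
            (p / (1 - p)) ^ (j - k) * ((α : ℝ) * p) * (1 - p) ^ (α - k)
          = ((α * ((α-k).factorial * (k-1).factorial) : ℕ) : ℝ)
              / (((α-j).factorial * j.factorial : ℕ) : ℝ)
            * (p ^ (j - k + 1) * (1 - p) ^ (α - j)) := by
        rw [div_pow, hpow]
        push_cast
        field_simp
        ring
      have hdpos : (0:ℝ) < (((α-j).factorial * j.factorial : ℕ) : ℝ) :=
        Nat.cast_pos.mpr (Nat.mul_pos (Nat.factorial_pos _) (Nat.factorial_pos _))
      have hfrac : ((α * ((α-k).factorial * (k-1).factorial) : ℕ) : ℝ)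
          / (((α-j).factorial * j.factorial : ℕ) : ℝ)
          ≤ ((α - k + 1).choose (j - k + 1) : ℝ) := by
        rw [div_le_iff₀ hdpos]
        exact_mod_cast nat_main α k j hk hkj hjα
      have hXnn : (0:ℝ) ≤ p ^ (j - k + 1) * (1 - p) ^ (α - j) :=
        mul_nonneg (pow_nonneg hp.le _) (pow_nonneg hq1.le _)
      calc ((α - k).factorial : ℝ) / ((α - j).factorial : ℝ) *
            (((k - 1).factorial : ℝ) / (j.factorial : ℝ)) *
              (p / (1 - p)) ^ (j - k) * ((α : ℝ) * p) * (1 - p) ^ (α - k)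
          = ((α * ((α-k).factorial * (k-1).factorial) : ℕ) : ℝ)
              / (((α-j).factorial * j.factorial : ℕ) : ℝ)
            * (p ^ (j - k + 1) * (1 - p) ^ (α - j)) := hrw
        _ ≤ ((α - k + 1).choose (j - k + 1) : ℝ)
            * (p ^ (j - k + 1) * (1 - p) ^ (α - j)) :=
            mul_le_mul_of_nonneg_right hfrac hXnn
        _ = g j := by rw [hg]; ring
    have hIcc : Finset.Icc k α
        = Finset.map ⟨fun i => k + i, fun a b h => by simpa using h⟩ (Finset.range (α - k + 1)) := by
      ext x
      simp only [Finset.mem_Icc, Finset.mem_map, Finset.mem_range, Function.Embedding.coeFn_mk]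
      dsimp only [DFunLike.coe]
      constructor
      · rintro ⟨h1, h2⟩; exact ⟨x - k, by omega, by omega⟩
      · rintro ⟨i, hi, rfl⟩; exact ⟨by omega, by omega⟩
    calc (∑ j ∈ Finset.Icc k α,
          ((α - k).factorial : ℝ) / ((α - j).factorial : ℝ) *
            (((k - 1).factorial : ℝ) / (j.factorial : ℝ)) *
              (p / (1 - p)) ^ (j - k) * ((α : ℝ) * p) * (1 - p) ^ (α - k))
        ≤ ∑ j ∈ Finset.Icc k α, g j := Finset.sum_le_sum key
      _ = ∑ i ∈ Finset.range (α - k + 1), g (k + i) := by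
          rw [hIcc, Finset.sum_map]
          rfl
      _ = ∑ i ∈ Finset.range (α - k + 1),
            p ^ (i + 1) * (1 - p) ^ ((α - k) - i) * (((α - k + 1).choose (i + 1) : ℕ) : ℝ) := by
          apply Finset.sum_congr rfl
          intro i hi
          rw [Finset.mem_range] at hi
          rw [hg]
          have e1 : k + i - k = i := by omega
          have e2 : α - (k + i) = (α - k) - i := by omega
          simp only [e1, e2]
      _ ≤ (p + (1 - p)) ^ ((α - k) + 1) := by
          conv_rhs => rw [add_pow, Finset.sum_range_succ']
          simp only [Nat.succ_sub_succ_eq_sub, pow_zero, Nat.sub_zero, Nat.choose_zero_right,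
            Nat.cast_one, mul_one, one_mul]
          exact le_add_of_nonneg_right (pow_nonneg hq1.le _)
      _ = 1 := by rw [show p + (1 - p) = (1:ℝ) by ring, one_pow]
  have hqpos : (0:ℝ) < (1 - p) ^ (α - k) := pow_pos hq1 _
  have step3 : T ≤ ((1 - p) ^ (α - k))⁻¹ := by
    rw [← one_div]
    exact (le_div_iff₀ hqpos).mpr step2
  have hzpow : q ^ ((k : ℤ) - (α : ℤ)) = ((1 - p) ^ (α - k))⁻¹ := by
    have hcast : (k : ℤ) - (α : ℤ) = -((α - k : ℕ) : ℤ) := by omega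
    rw [hq, hcast, zpow_neg, zpow_natCast]
  rw [hzpow]
  linarith
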